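/- Let A > 0, set p = −9·A³/10, and define ψ : ℝ × ℝ → ℝ by ψ(t,x) = A·(sech(x − p·t))^{2/3} (real power of the positive number sech(x − p·t)). Then ψ satisfies the flow equation ∂_t(−ψ_{xx}/ψ) = ∂_x(ψ³) at every point (t,x) ∈ ℝ²; equivalently, ∂_x(ψ³) + ∂_t(ψ_{xx}/ψ) = 0. Hence this equation admits the solitonic solution A·sech^{2/3}(x − p·t) with speed of propagation p = −9·A³/10. -/

import Mathlib

/-- `cosh` never vanishes. -/
lemma aux_coshne (y : ℝ) : Real.cosh y ≠ 0 := (Real.cosh_pos y).ne'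

/-- First derivative of `A · cosh^( -2/3 )`. -/
lemma aux_hF1 (A y : ℝ) :
    HasDerivAt (fun y => A * Real.cosh y ^ ((-2:ℝ)/3))
      (A * (Real.sinh y * ((-2:ℝ)/3) * Real.cosh y ^ ((-2:ℝ)/3 - 1))) y :=
  ((Real.hasDerivAt_cosh y).rpow_const (Or.inl (aux_coshne y))).const_mul A

/-- Second derivative of `A · cosh^( -2/3 )`. -/
lemma aux_hF2 (A y : ℝ) :
    HasDerivAt (fun y => A * (Real.sinh y * ((-2:ℝ)/3) * Real.cosh y ^ ((-2:ℝ)/3 - 1)))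
      (A * ((Real.cosh y * ((-2:ℝ)/3)) * Real.cosh y ^ ((-2:ℝ)/3 - 1)
        + (Real.sinh y * ((-2:ℝ)/3)) * (Real.sinh y * ((-2:ℝ)/3 - 1) * Real.cosh y ^ ((-2:ℝ)/3 - 1 - 1)))) y :=
  (((Real.hasDerivAt_sinh y).mul_const _).mul
    ((Real.hasDerivAt_cosh y).rpow_const (Or.inl (aux_coshne y)))).const_mul A

lemma aux_hG (ξ : ℝ) :
    HasDerivAt (fun ξ => -4/9 + (10/9) / Real.cosh ξ ^ 2)
      ((0 * Real.cosh ξ ^ 2 - 10/9 * ((2:ℕ) * Real.cosh ξ ^ 1 * Real.sinh ξ)) / (Real.cosh ξ ^ 2) ^ 2) ξ :=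
  ((hasDerivAt_const ξ ((10:ℝ)/9)).div ((Real.hasDerivAt_cosh ξ).pow 2)
    (pow_ne_zero 2 (aux_coshne ξ))).const_add (-4/9)

lemma aux_hR (B ξ : ℝ) :
    HasDerivAt (fun ξ => B / Real.cosh ξ ^ 2)
      ((0 * Real.cosh ξ ^ 2 - B * ((2:ℕ) * Real.cosh ξ ^ 1 * Real.sinh ξ)) / (Real.cosh ξ ^ 2) ^ 2) ξ :=
  (hasDerivAt_const ξ B).div ((Real.hasDerivAt_cosh ξ).pow 2) (pow_ne_zero 2 (aux_coshne ξ))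

/-- Partial derivative in the second (space) variable. -/
noncomputable def pdx (u : ℝ → ℝ → ℝ) : ℝ → ℝ → ℝ :=
  fun t x => deriv (fun y => u t y) x

/-- Partial derivative in the first (time) variable. -/
noncomputable def pdt (u : ℝ → ℝ → ℝ) : ℝ → ℝ → ℝ :=
  fun t x => deriv (fun s => u s x) t

/-- for `A > 0`, `p = −9·A³/10`, the function
`ψ(t,x) = A·(sech(x − p·t))^(2/3)` solves the flow equation
`∂_t(−ψ_{xx}/ψ) = ∂_x(ψ³)` everywhere; it is a solitonic solution with speed `p`. -/
theorem stmt_9 (A p : ℝ) (hA : 0 < A) (hp : p = -9 * A ^ 3 / 10)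
    (ψ : ℝ → ℝ → ℝ)
    (hψ : ψ = fun t x => A * (1 / Real.cosh (x - p * t)) ^ ((2 : ℝ) / 3)) :
    ∀ t x : ℝ,
      pdt (fun t x => -(pdx (pdx ψ) t x) / ψ t x) t x
        = pdx (fun t x => (ψ t x) ^ 3) t x := by
  have key1 : ∀ t x : ℝ, ψ t x = A * Real.cosh (x - p*t) ^ ((-2:ℝ)/3) := by
    intro t x
    rw [hψ]
    show A * (1 / Real.cosh (x - p * t)) ^ ((2:ℝ)/3) = _
    rw [one_div, Real.inv_rpow (Real.cosh_pos _).le, ← Real.rpow_neg (Real.cosh_pos _).le]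
    norm_num
  -- first space derivative of ψ
  have hx1 : ∀ t x : ℝ, pdx ψ t x
      = A * (Real.sinh (x - p*t) * ((-2:ℝ)/3) * Real.cosh (x - p*t) ^ ((-2:ℝ)/3 - 1)) := by
    intro t x
    have hin : HasDerivAt (fun y : ℝ => y - p*t) 1 x := (hasDerivAt_id x).sub_const _
    have H : HasDerivAt (fun y => A * Real.cosh (y - p*t) ^ ((-2:ℝ)/3))
        (A * (Real.sinh (x - p*t) * ((-2:ℝ)/3) * Real.cosh (x - p*t) ^ ((-2:ℝ)/3 - 1)) * 1) x :=
      (aux_hF1 A (x - p*t)).comp (h := fun y : ℝ => y - p*t) x hin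
    have hfun : (fun y => ψ t y) = fun y => A * Real.cosh (y - p*t) ^ ((-2:ℝ)/3) :=
      funext fun y => key1 t y
    have h0 : pdx ψ t x = deriv (fun y => ψ t y) x := rfl
    rw [h0, hfun, H.deriv, mul_one]
  -- second space derivative of ψ
  have hx2 : ∀ t x : ℝ, pdx (pdx ψ) t x
      = A * ((Real.cosh (x-p*t) * ((-2:ℝ)/3)) * Real.cosh (x-p*t) ^ ((-2:ℝ)/3 - 1)
        + (Real.sinh (x-p*t) * ((-2:ℝ)/3)) * (Real.sinh (x-p*t) * ((-2:ℝ)/3 - 1) * Real.cosh (x-p*t) ^ ((-2:ℝ)/3 - 1 - 1))) := by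
    intro t x
    have hin : HasDerivAt (fun y : ℝ => y - p*t) 1 x := (hasDerivAt_id x).sub_const _
    have H : HasDerivAt
        (fun y => A * (Real.sinh (y - p*t) * ((-2:ℝ)/3) * Real.cosh (y - p*t) ^ ((-2:ℝ)/3 - 1)))
        (A * ((Real.cosh (x-p*t) * ((-2:ℝ)/3)) * Real.cosh (x-p*t) ^ ((-2:ℝ)/3 - 1)
          + (Real.sinh (x-p*t) * ((-2:ℝ)/3)) * (Real.sinh (x-p*t) * ((-2:ℝ)/3 - 1)
            * Real.cosh (x-p*t) ^ ((-2:ℝ)/3 - 1 - 1))) * 1) x :=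
      (aux_hF2 A (x - p*t)).comp (h := fun y : ℝ => y - p*t) x hin
    have hfun : (fun y => pdx ψ t y)
        = fun y => A * (Real.sinh (y - p*t) * ((-2:ℝ)/3) * Real.cosh (y - p*t) ^ ((-2:ℝ)/3 - 1)) :=
      funext fun y => hx1 t y
    have h0 : pdx (pdx ψ) t x = deriv (fun y => pdx ψ t y) x := rfl
    rw [h0, hfun, H.deriv, mul_one]
  -- the quotient −ψ_xx/ψ simplifies to −4/9 + (10/9)·sech²
  have hQ : (fun t x => -(pdx (pdx ψ) t x) / ψ t x)
      = fun t x => -4/9 + (10/9) / Real.cosh (x - p*t) ^ 2 := by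
    funext t x
    rw [hx2, key1]
    set c := Real.cosh (x - p*t) with hc
    set s := Real.sinh (x - p*t) with hs
    have hcpos : 0 < c := Real.cosh_pos _
    have hs2 : s ^ 2 = c ^ 2 - 1 := by rw [hs, hc]; exact Real.sinh_sq _
    have e1 : c ^ ((-2:ℝ)/3 - 1) = c ^ ((-2:ℝ)/3) / c := by
      rw [Real.rpow_sub hcpos, Real.rpow_one]
    have e2 : c ^ ((-2:ℝ)/3 - 1 - 1) = c ^ ((-2:ℝ)/3) / c / c := by
      rw [Real.rpow_sub hcpos, Real.rpow_sub hcpos, Real.rpow_one]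
    have hq : (0:ℝ) < c ^ ((-2:ℝ)/3) := Real.rpow_pos_of_pos hcpos _
    rw [e1, e2]
    field_simp
    linear_combination (-90) * hs2
  -- ψ³ = A³ · sech²
  have key3 : ∀ t x : ℝ, (ψ t x) ^ 3 = A ^ 3 / Real.cosh (x - p*t) ^ 2 := by
    intro t x
    have hcpos : 0 < Real.cosh (x - p*t) := Real.cosh_pos _
    rw [key1, mul_pow, ← Real.rpow_natCast (Real.cosh (x - p*t) ^ ((-2:ℝ)/3)) 3,
      ← Real.rpow_mul hcpos.le,
      show ((-2:ℝ)/3 * (3:ℕ) : ℝ) = -2 by norm_num,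
      show ((-2:ℝ) : ℝ) = -((2:ℕ):ℝ) by norm_num,
      Real.rpow_neg hcpos.le, Real.rpow_natCast, div_eq_mul_inv]
  intro t x
  rw [hQ]
  -- time derivative of the left-hand side
  have hinT : HasDerivAt (fun s : ℝ => x - p*s) (-(p*1)) t :=
    ((hasDerivAt_id t).const_mul p).const_sub x
  have HL : HasDerivAt (fun s => -4/9 + (10:ℝ)/9 / Real.cosh (x - p*s) ^ 2)
      ((0 * Real.cosh (x - p*t) ^ 2 - 10/9 * ((2:ℕ) * Real.cosh (x - p*t) ^ 1 * Real.sinh (x - p*t)))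
        / (Real.cosh (x - p*t) ^ 2) ^ 2 * -(p*1)) t :=
    (aux_hG (x - p*t)).comp (h := fun s : ℝ => x - p*s) t hinT
  -- space derivative of the right-hand side
  have hinX : HasDerivAt (fun y : ℝ => y - p*t) 1 x := (hasDerivAt_id x).sub_const _
  have HR : HasDerivAt (fun y => A^3 / Real.cosh (y - p*t) ^ 2)
      ((0 * Real.cosh (x - p*t) ^ 2 - A^3 * ((2:ℕ) * Real.cosh (x - p*t) ^ 1 * Real.sinh (x - p*t)))
        / (Real.cosh (x - p*t) ^ 2) ^ 2 * 1) x :=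
    (aux_hR (A^3) (x - p*t)).comp (h := fun y : ℝ => y - p*t) x hinX
  have hfunR : (fun y => (ψ t y) ^ 3) = fun y => A^3 / Real.cosh (y - p*t) ^ 2 :=
    funext fun y => key3 t y
  have hL0 : pdt (fun t x => -4/9 + (10:ℝ)/9 / Real.cosh (x - p*t) ^ 2) t x
      = deriv (fun s => -4/9 + (10:ℝ)/9 / Real.cosh (x - p*s) ^ 2) t := rfl
  have hR0 : pdx (fun t x => (ψ t x) ^ 3) t x = deriv (fun y => (ψ t y) ^ 3) x := rfl
  rw [hL0, hR0, hfunR, HL.deriv, HR.deriv]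
  have hc : Real.cosh (x - p*t) ≠ 0 := aux_coshne _
  subst hp
  field_simp
  ring
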